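/- Let cvr be a uniquely-labeled CVR of size S for a batch B of ballots with |B| = S, where ballot identifiers within B need not be unique. Then there exists a bijection f from rows of the CVR to ballots in B such that for every row r: if some ballot in B has identifier matching ι_r, then f(r) is a ballot with identifier ι_r minimizing W_{f(r)} − L_{f(r)} being subtracted, i.e., achieving the row discrepancy D_r = (W_r − L_r) + min({1} ∪ {−(W_b − L_b) : id_b = ι_r, b ∈ B}); and if no ballot matches ι_r, then (W_r − L_r) − (W_{f(r)} − L_{f(r)}) ≤ D_r. -/

import Mathlib

/-- For a uniquely-labeled CVR of size `S` over a batch `B` of exactly `S` ballots (whose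
identifiers need not be unique), there is a bijection `f` from rows to ballots such that:
for every row matched by some ballot, `f r` is a matching ballot achieving the row
discrepancy `D r`; and for every unmatched row, the assigned discrepancy is at most `D r`. -/
theorem exists_pessimal_bijection
    {Ballot I : Type*} [DecidableEq Ballot] [DecidableEq I]
    (S : ℕ) (B : Finset Ballot) (hcard : B.card = S)
    (id_ : Ballot → I) (W L : Ballot → ℤ)
    (hW : ∀ b, W b ∈ ({0, 1} : Set ℤ)) (hL : ∀ b, L b ∈ ({0, 1} : Set ℤ))
    (ι : Fin S → I) (hinj : Function.Injective ι)
    (Wr Lr : Fin S → ℤ)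
    (hWr : ∀ r, Wr r ∈ ({0, 1} : Set ℤ)) (hLr : ∀ r, Lr r ∈ ({0, 1} : Set ℤ))
    (D : Fin S → ℤ)
    (hD : ∀ r, D r = (Wr r - Lr r) +
      (insert (1 : ℤ)
        ((B.filter (fun b => id_ b = ι r)).image (fun b => -(W b - L b)))).min'
        (Finset.insert_nonempty _ _)) :
    ∃ f : Fin S ≃ {b // b ∈ B},
      ∀ r : Fin S,
        ((∃ b ∈ B, id_ b = ι r) →
          id_ (f r).1 = ι r ∧ (Wr r - Lr r) - (W (f r).1 - L (f r).1) = D r) ∧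
        ((¬ ∃ b ∈ B, id_ b = ι r) →
          (Wr r - Lr r) - (W (f r).1 - L (f r).1) ≤ D r) := by
  classical
  -- Any ballot has -(W b - L b) ≤ 1
  have hphi : ∀ b : Ballot, -(W b - L b) ≤ 1 := by
    intro b
    have h1 : W b = 0 ∨ W b = 1 := by simpa using hW b
    have h2 : L b = 0 ∨ L b = 1 := by simpa using hL b
    omega
  set pM : Fin S → Prop := fun r => ∃ b ∈ B, id_ b = ι r with hpM
  -- choose a pessimal matching ballot for every matched row
  have hex : ∀ r : {r : Fin S // pM r}, ∃ b : {b // b ∈ B},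
      id_ b.1 = ι r.1 ∧ ∀ b' ∈ B, id_ b' = ι r.1 →
        -(W b.1 - L b.1) ≤ -(W b' - L b') := by
    rintro ⟨r, b0, hb0, hid0⟩
    have hne : (B.filter (fun b => id_ b = ι r)).Nonempty :=
      ⟨b0, Finset.mem_filter.2 ⟨hb0, hid0⟩⟩
    obtain ⟨b, hb, hmin⟩ := Finset.exists_min_image _ (fun b => -(W b - L b)) hne
    rw [Finset.mem_filter] at hb
    exact ⟨⟨b, hb.1⟩, hb.2, fun b' hb' hid' => hmin b' (Finset.mem_filter.2 ⟨hb', hid'⟩)⟩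
  choose g hg1 hg2 using hex
  have ginj : Function.Injective g := by
    intro r1 r2 h
    have : ι r1.1 = ι r2.1 := by rw [← hg1 r1, ← hg1 r2, h]
    exact Subtype.ext (hinj this)
  let e1 : {r : Fin S // pM r} ≃ Set.range g := Equiv.ofInjective g ginj
  have hcard2 : Fintype.card {r : Fin S // ¬ pM r}
      = Fintype.card {b : {b // b ∈ B} // b ∉ Set.range g} := by
    have h1 : Fintype.card {b // b ∈ B} = S := by rw [Fintype.card_coe, hcard]
    have h2 : Fintype.card (Set.range g) = Fintype.card {r : Fin S // pM r} :=
      (Fintype.card_congr e1).symm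
    have h3 : Fintype.card {r : Fin S // ¬ pM r}
        = Fintype.card (Fin S) - Fintype.card {r : Fin S // pM r} :=
      Fintype.card_subtype_compl _
    have h4 : Fintype.card {b : {b // b ∈ B} // ¬ b ∈ Set.range g}
        = Fintype.card {b // b ∈ B} - Fintype.card {b : {b // b ∈ B} // b ∈ Set.range g} :=
      Fintype.card_subtype_compl _
    have h5 : Fintype.card {b : {b // b ∈ B} // b ∈ Set.range g}
        = Fintype.card (Set.range g) := rfl
    have h6 : Fintype.card {r : Fin S // pM r} ≤ Fintype.card (Fin S) :=
      Fintype.card_subtype_le _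
    simp only [Fintype.card_fin] at h3 h6
    omega
  let e2 : {r : Fin S // ¬ pM r} ≃ {b : {b // b ∈ B} // b ∉ Set.range g} :=
    Fintype.equivOfCardEq hcard2
  let f : Fin S ≃ {b // b ∈ B} :=
    (Equiv.sumCompl pM).symm.trans ((e1.sumCongr e2).trans
      (Equiv.sumCompl (fun b : {b // b ∈ B} => b ∈ Set.range g)))
  have hf : ∀ (r : Fin S) (hr : pM r), f r = g ⟨r, hr⟩ := by
    intro r hr
    simp only [f, Equiv.trans_apply, Equiv.sumCompl_symm_apply_of_pos hr,
      Equiv.sumCongr_apply, Sum.map_inl, Equiv.sumCompl_apply_inl]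
    rfl
  refine ⟨f, fun r => ⟨?_, ?_⟩⟩
  · intro hr
    have hfr : f r = g ⟨r, hr⟩ := hf r hr
    set gb := (g ⟨r, hr⟩).1 with hgb
    refine ⟨by rw [hfr]; exact hg1 ⟨r, hr⟩, ?_⟩
    have hmem : gb ∈ B.filter (fun b => id_ b = ι r) :=
      Finset.mem_filter.2 ⟨(g ⟨r, hr⟩).2, hg1 ⟨r, hr⟩⟩
    have hmin' :
        (insert (1 : ℤ)
          ((B.filter (fun b => id_ b = ι r)).image (fun b => -(W b - L b)))).min'
          (Finset.insert_nonempty _ _) = -(W gb - L gb) := by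
      apply le_antisymm
      · exact Finset.min'_le _ _ (Finset.mem_insert.2 (Or.inr
          (Finset.mem_image.2 ⟨gb, hmem, rfl⟩)))
      · apply Finset.le_min'
        intro y hy
        rcases Finset.mem_insert.1 hy with h | h
        · rw [h]; exact hphi gb
        · obtain ⟨b', hb', rfl⟩ := Finset.mem_image.1 h
          rw [Finset.mem_filter] at hb'
          exact hg2 ⟨r, hr⟩ b' hb'.1 hb'.2
    rw [hD r, hmin', hfr]
    ring
  · intro hnr
    have hfilt : B.filter (fun b => id_ b = ι r) = ∅ := by
      rw [Finset.filter_eq_empty_iff]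
      intro b hb hid
      exact hnr ⟨b, hb, hid⟩
    have : D r = (Wr r - Lr r) + 1 := by
      rw [hD r]
      congr 1
      simp [hfilt]
    rw [this]
    have := hphi (f r).1
    omega
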